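/- Let H be a real Hilbert space and let C be a nonempty closed convex subset of H. Then the following are equivalent: (i) every (c)-mapping T : C → C has a fixed point in C; (ii) C is bounded. -/

import Mathlib

open RealInnerProductSpace Filter Topology Bornology Set



/-- `T` is a (c)-mapping on `C`: there exist `a, c ∈ [0,1]` with `c > 0`, `a + 2c = 1`
and `‖Tx - Ty‖ ≤ a‖x - y‖ + c(‖Tx - y‖ + ‖Ty - x‖)` for all `x, y ∈ C`. -/
def IsCMapping {X : Type*} [NormedAddCommGroup X] (T : X → X) (C : Set X) : Prop :=
  ∃ a c : ℝ, a ∈ Set.Icc (0 : ℝ) 1 ∧ c ∈ Set.Icc (0 : ℝ) 1 ∧ 0 < c ∧ a + 2 * c = 1 ∧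
    ∀ x ∈ C, ∀ y ∈ C, ‖T x - T y‖ ≤ a * ‖x - y‖ + c * (‖T x - y‖ + ‖T y - x‖)


lemma aux_afp {H : Type*} [NormedAddCommGroup H]
    {C : Set H} (hne : C.Nonempty) (hb : IsBounded C)
    {T : H → H} (hmT : Set.MapsTo T C C)
    {a c : ℝ} (ha : 0 ≤ a) (hcpos : 0 < c) (hsum : a + 2 * c = 1)
    (hT : ∀ x ∈ C, ∀ y ∈ C, ‖T x - T y‖ ≤ a * ‖x - y‖ + c * (‖T x - y‖ + ‖T y - x‖)) :
    ∀ ε > 0, ∃ x ∈ C, ‖x - T x‖ < ε := by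
  have haeq : a = 1 - 2*c := by linarith
  subst haeq
  have hc2 : c ≤ 1/2 := by linarith
  obtain ⟨B, hB⟩ := isBounded_iff_forall_norm_le.mp hb
  have hB0 : 0 ≤ B := le_trans (norm_nonneg _) (hB _ hne.choose_spec)
  have tri : ∀ p q s : H, ‖p - s‖ ≤ ‖p - q‖ + ‖q - s‖ := fun p q s => by
    simpa [dist_eq_norm] using dist_triangle p q s
  set S : Set ℝ := (fun x => ‖x - T x‖) '' C with hS
  have hSne : S.Nonempty := hne.image _
  have hSlb : ∀ s ∈ S, (0:ℝ) ≤ s := by rintro s ⟨x, _, rfl⟩; exact norm_nonneg _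
  set r : ℝ := sInf S with hr
  have hrle : ∀ x ∈ C, r ≤ ‖x - T x‖ := fun x hx =>
    csInf_le ⟨0, fun s hs => hSlb s hs⟩ ⟨x, hx, rfl⟩
  have hdec : ∀ x ∈ C, ‖T x - T (T x)‖ ≤ ‖x - T x‖ := by
    intro x hx
    have h := hT x hx (T x) (hmT hx)
    have t1 : ‖T (T x) - x‖ ≤ ‖T (T x) - T x‖ + ‖T x - x‖ := tri _ _ _
    have e1 : ‖T x - T x‖ = 0 := by simp
    have e2 : ‖T (T x) - T x‖ = ‖T x - T (T x)‖ := norm_sub_rev _ _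
    have e3 : ‖T x - x‖ = ‖x - T x‖ := norm_sub_rev _ _
    nlinarith [norm_nonneg (x - T x), norm_nonneg (T x - T (T x))]
  have hmem : ∀ x ∈ C, ∀ k : ℕ, T^[k] x ∈ C := fun x hx k => hmT.iterate k hx
  have hchain : ∀ x ∈ C, ∀ m : ℕ, ‖x - T^[m] x‖ ≤ m * ‖x - T x‖ := by
    intro x hx m
    induction m with
    | zero => simp
    | succ m ih =>
      have hdeck : ∀ k : ℕ, ‖T^[k] x - T (T^[k] x)‖ ≤ ‖x - T x‖ := by
        intro k
        induction k with
        | zero => simp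
        | succ k ihk =>
          rw [Function.iterate_succ_apply']
          exact le_trans (hdec _ (hmem x hx k)) ihk
      have t1 := tri x (T^[m] x) (T^[m+1] x)
      have t2 : ‖T^[m] x - T^[m+1] x‖ = ‖T^[m] x - T (T^[m] x)‖ := by
        rw [Function.iterate_succ_apply']
      push_cast
      rw [t2] at t1
      nlinarith [hdeck m, norm_nonneg (x - T x)]
  -- main induction
  have main : ∀ n : ℕ, ∃ K : ℝ, 0 ≤ K ∧ ∀ x ∈ C,
      (n : ℝ) * r ≤ ‖x - T^[n] x‖ + K * (‖x - T x‖ - r) := by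
    intro n
    induction n with
    | zero => exact ⟨0, le_refl _, fun x hx => by simp [norm_nonneg]⟩
    | succ n ih =>
      rcases Nat.eq_zero_or_pos n with rfl | hn
      · exact ⟨0, le_refl _, fun x hx => by simpa using hrle x hx⟩
      obtain ⟨K, hK, hind⟩ := ih
      obtain ⟨m, rfl⟩ : ∃ m, n = m + 1 := ⟨n - 1, by omega⟩
      set Q : ℝ := (K + (1 - 2*c) * (m+1) + c * m) / c with hQ
      have hQ0 : 0 ≤ Q := div_nonneg (by positivity) hcpos.le
      refine ⟨Q, hQ0, ?_⟩
      intro x hx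
      set d : ℝ := ‖x - T x‖ with hd
      have he : r ≤ d := hrle x hx
      have f0 : ‖T x - T (T x)‖ - r ≤ d - r := by linarith [hdec x hx]
      have f1 := hind (T x) (hmT hx)
      rw [← Function.iterate_succ_apply T (m+1)] at f1
      simp only [Nat.succ_eq_add_one] at f1
      have f1' : ((m:ℝ)+1) * r ≤ ‖T x - T^[m+1+1] x‖ + K * (d - r) := by
        have h5 : K * (‖T x - T (T x)‖ - r) ≤ K * (d - r) := mul_le_mul_of_nonneg_left f0 hK
        push_cast at f1
        linarith
      have f2 : ‖x - T^[m+1] x‖ ≤ ((m:ℝ)+1) * d := by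
        have := hchain x hx (m+1); push_cast at this; linarith
      have f3 : ‖T x - T^[m+1] x‖ ≤ (m:ℝ) * d := by
        have h6 := hchain (T x) (hmT hx) m
        rw [← Function.iterate_succ_apply T m] at h6
        have h7 : (m:ℝ) * ‖T x - T (T x)‖ ≤ (m:ℝ) * d :=
          mul_le_mul_of_nonneg_left (hdec x hx) (by positivity)
        linarith
      have f4 := hT x hx (T^[m+1] x) (hmem x hx (m+1))
      rw [← Function.iterate_succ_apply' T (m+1)] at f4
      simp only [Nat.succ_eq_add_one] at f4
      have f5 : ‖T^[m+1+1] x - x‖ = ‖x - T^[m+1+1] x‖ := norm_sub_rev _ _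
      have hKc : c * Q = K + (1 - 2*c) * (m+1) + c * m := by
        rw [hQ]; field_simp
      set G : ℝ := ‖x - T^[m+1+1] x‖ with hG
      rw [f5] at f4
      have key : c * (((m:ℝ)+1+1) * r) ≤ c * G + (K + (1 - 2*c) * (m+1) + c * m) * (d - r) := by
        have p2 : (1 - 2*c) * ‖x - T^[m+1] x‖ ≤ (1 - 2*c) * (((m:ℝ)+1) * d) := mul_le_mul_of_nonneg_left f2 ha
        have p3 : c * ‖T x - T^[m+1] x‖ ≤ c * ((m:ℝ) * d) := mul_le_mul_of_nonneg_left f3 hcpos.le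
        nlinarith [f1', f4, he]
      have key2 : c * (((m:ℝ)+1+1) * r - G) ≤ c * (Q * (d - r)) := by nlinarith [key, hKc]
      have key3 := (mul_le_mul_iff_right₀ hcpos).mp key2
      push_cast
      linarith
  -- conclude r ≤ 0
  have hr0 : r ≤ 0 := by
    by_contra hpos
    push_neg at hpos
    set n : ℕ := ⌈(2*B + 2)/r⌉₊ with hn
    obtain ⟨K, hK, hind⟩ := main n
    have hlt : sInf S < r + 1/(K+1) := by
      have : (0:ℝ) < 1/(K+1) := by positivity
      linarith
    obtain ⟨s, hsS, hslt⟩ := exists_lt_of_csInf_lt hSne hlt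
    obtain ⟨x, hx, rfl⟩ := hsS
    have hxn := hind x hx
    have hbd : ‖x - T^[n] x‖ ≤ 2*B := by
      have h1 := hB x hx
      have h2 := hB _ (hmem x hx n)
      have := norm_sub_le x (T^[n] x)
      linarith
    have hKe : K * (‖x - T x‖ - r) ≤ 1 := by
      have h0 : ‖x - T x‖ - r ≤ 1/(K+1) := by linarith
      have h1 : K * (‖x - T x‖ - r) ≤ K * (1/(K+1)) := mul_le_mul_of_nonneg_left h0 hK
      have h2 : K * (1/(K+1)) ≤ 1 := by
        rw [mul_one_div, div_le_one (by linarith)]; linarith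
      linarith
    have hfin : (n:ℝ) * r ≤ 2*B + 1 := by linarith
    have hceil : ((2*B+2)/r : ℝ) ≤ n := Nat.le_ceil _
    rw [div_le_iff₀ hpos] at hceil
    linarith
  intro ε hε
  have : sInf S < ε := lt_of_le_of_lt hr0 hε
  obtain ⟨s, hsS, hslt⟩ := exists_lt_of_csInf_lt hSne this
  obtain ⟨x, hx, rfl⟩ := hsS
  exact ⟨x, hx, hslt⟩

lemma aux_proj {H : Type*} [NormedAddCommGroup H] [InnerProductSpace ℝ H] [CompleteSpace H]
    {C : Set H} (hne : C.Nonempty) (hclosed : IsClosed C) (hconv : Convex ℝ C) (u : H) :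
    ∃ z ∈ C, ∀ w ∈ C, ⟪u - z, w - z⟫ ≤ 0 := by
  obtain ⟨z, hzC, hz⟩ := exists_norm_eq_iInf_of_complete_convex hne
    (hclosed.isComplete) hconv u
  exact ⟨z, hzC, (norm_eq_iInf_iff_real_inner_le_zero hconv hzC).mp hz⟩

lemma aux_forward {H : Type*} [NormedAddCommGroup H] [InnerProductSpace ℝ H] [CompleteSpace H]
    (C : Set H) (hne : C.Nonempty) (hclosed : IsClosed C) (hconv : Convex ℝ C)
    (hfpp : ∀ T : H → H, Set.MapsTo T C C → IsCMapping T C → ∃ x ∈ C, T x = x) :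
    IsBounded C := by
  by_contra hnb
  -- there is a direction in which C is unbounded
  have hv : ∃ v : H, ¬ (∃ M : ℝ, ∀ x ∈ C, ⟪v, x⟫ ≤ M) := by
    by_contra hall
    push_neg at hall
    apply hnb
    have hpt : ∀ w : H, ∃ M : ℝ, ∀ i : C, ‖(InnerProductSpace.toDual ℝ H (i : H)) w‖ ≤ M := by
      intro w
      obtain ⟨M₁, hM₁⟩ := hall w
      obtain ⟨M₂, hM₂⟩ := hall (-w)
      refine ⟨max M₁ M₂, fun i => ?_⟩
      rw [InnerProductSpace.toDual_apply_apply, Real.norm_eq_abs, abs_le]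
      have hcomm : ⟪(i:H), w⟫ = ⟪w, (i:H)⟫ := real_inner_comm _ _
      have ha : ⟪w, (i:H)⟫ ≤ M₁ := hM₁ i i.2
      have hb : -⟪w, (i:H)⟫ ≤ M₂ := by
        have := hM₂ i i.2
        rwa [inner_neg_left] at this
      constructor
      · rw [hcomm]; linarith [le_max_right M₁ M₂]
      · rw [hcomm]; linarith [le_max_left M₁ M₂]
    obtain ⟨M, hM⟩ := banach_steinhaus hpt
    rw [isBounded_iff_forall_norm_le]
    refine ⟨M, fun x hx => ?_⟩
    have := hM ⟨x, hx⟩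
    rwa [(InnerProductSpace.toDual ℝ H).norm_map] at this
  obtain ⟨v, hv⟩ := hv
  -- projection-based fixed point free (c)-mapping
  choose P hPC hP using fun u => aux_proj hne hclosed hconv u
  set T : H → H := fun x => P (x + v) with hT
  have hmT : Set.MapsTo T C C := fun x _ => hPC (x + v)
  have hcm : IsCMapping T C := by
    refine ⟨0, 1/2, by norm_num, by norm_num, by norm_num, by norm_num, ?_⟩
    intro x hx y hy
    set p := T x with hp
    set q := T y with hq
    have h1 : ⟪x + v - p, q - p⟫ ≤ 0 := hP (x + v) q (hPC (y + v))
    have h2 : ⟪y + v - q, p - q⟫ ≤ 0 := hP (y + v) p (hPC (x + v))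
    have hsplit : ⟪x + v - p, q - p⟫ = ⟪(x - y) - (p - q), q - p⟫ + ⟪y + v - q, q - p⟫ := by
      rw [← inner_add_left]; congr 1; abel
    have hneg : ⟪y + v - q, q - p⟫ = -⟪y + v - q, p - q⟫ := by
      rw [← inner_neg_right]; congr 1; abel
    have key : 0 ≤ ⟪(x - y) - (p - q), p - q⟫ := by
      have h4 : ⟪(x - y) - (p - q), q - p⟫ ≤ 0 := by
        rw [hsplit, hneg] at h1; linarith
      rw [show (q - p : H) = -(p - q) by abel, inner_neg_right] at h4; linarith
    have hfirm : ‖p - q‖ ^ 2 ≤ ⟪x - y, p - q⟫ := by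
      rw [inner_sub_left, real_inner_self_eq_norm_sq] at key; linarith
    rcases eq_or_lt_of_le (norm_nonneg (p - q)) with h0 | h0
    · simp only [zero_mul, ← h0]
      positivity
    · have c1 : ⟪p - y, p - q⟫ ≤ ‖p - y‖ * ‖p - q‖ := real_inner_le_norm _ _
      have c2 : ⟪x - q, p - q⟫ ≤ ‖x - q‖ * ‖p - q‖ := real_inner_le_norm _ _
      have csum : ⟪p - y, p - q⟫ + ⟪x - q, p - q⟫ = ‖p - q‖^2 + ⟪x - y, p - q⟫ := by
        rw [← real_inner_self_eq_norm_sq, ← inner_add_left, ← inner_add_left]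
        congr 1
        abel
      have h2e : 2 * ‖p - q‖ ≤ ‖p - y‖ + ‖x - q‖ := by
        have h5 : 2 * ‖p-q‖^2 ≤ (‖p - y‖ + ‖x - q‖) * ‖p - q‖ := by nlinarith
        nlinarith
      have hrev : ‖q - x‖ = ‖x - q‖ := norm_sub_rev _ _
      rw [hrev]
      linarith
  obtain ⟨x, hxC, hfix⟩ := hfpp T hmT hcm
  apply hv
  refine ⟨⟪v, x⟫, fun w hw => ?_⟩
  have hfix' : P (x + v) = x := hfix
  have hthis := hP (x + v) w hw
  rw [hfix'] at hthis
  have hsimp : x + v - x = v := by abel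
  rw [hsimp, inner_sub_right] at hthis
  linarith

section
variable {H : Type*} [NormedAddCommGroup H] [InnerProductSpace ℝ H] [CompleteSpace H]

lemma aux_lim (𝒰 : Ultrafilter ℕ) (u : ℕ → ℝ) {R : ℝ} (h : ∀ n, |u n| ≤ R) :
    ∃ L, Tendsto u 𝒰 (𝓝 L) := by
  have hmem : (𝒰.map u : Filter ℝ) ≤ Filter.principal (Set.Icc (-R) R) := by
    rw [le_principal_iff]
    have : ∀ n, u n ∈ Set.Icc (-R) R := fun n => abs_le.mp (h n)
    exact Filter.mem_map.mpr (Filter.univ_mem' this)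
  obtain ⟨L, _, hL⟩ := (isCompact_Icc (a := -R) (b := R)).ultrafilter_le_nhds (𝒰.map u) hmem
  exact ⟨L, hL⟩

lemma aux_proj' {C : Set H} (hne : C.Nonempty) (hclosed : IsClosed C) (hconv : Convex ℝ C)
    (u : H) : ∃ z ∈ C, ∀ w ∈ C, ⟪u - z, w - z⟫ ≤ 0 := by
  obtain ⟨z, hzC, hz⟩ := exists_norm_eq_iInf_of_complete_convex hne
    (hclosed.isComplete) hconv u
  exact ⟨z, hzC, (norm_eq_iInf_iff_real_inner_le_zero hconv hzC).mp hz⟩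

lemma aux_afp' {C : Set H} (hne : C.Nonempty) (hb : IsBounded C)
    {T : H → H} (hmT : Set.MapsTo T C C)
    {a c : ℝ} (ha : 0 ≤ a) (hcpos : 0 < c) (hsum : a + 2 * c = 1)
    (hT : ∀ x ∈ C, ∀ y ∈ C, ‖T x - T y‖ ≤ a * ‖x - y‖ + c * (‖T x - y‖ + ‖T y - x‖)) :
    ∀ ε > 0, ∃ x ∈ C, ‖x - T x‖ < ε := aux_afp hne hb hmT ha hcpos hsum hT

lemma aux_reverse {C : Set H} (hne : C.Nonempty) (hclosed : IsClosed C) (hconv : Convex ℝ C)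
    (hb : IsBounded C) (T : H → H) (hmT : Set.MapsTo T C C)
    {a c : ℝ} (ha : 0 ≤ a) (hcpos : 0 < c) (hsum : a + 2 * c = 1)
    (hT : ∀ x ∈ C, ∀ y ∈ C, ‖T x - T y‖ ≤ a * ‖x - y‖ + c * (‖T x - y‖ + ‖T y - x‖)) :
    ∃ x ∈ C, T x = x := by
  have hc2 : c ≤ 1/2 := by linarith
  obtain ⟨B, hB⟩ := isBounded_iff_forall_norm_le.mp hb
  have hB0 : 0 ≤ B := le_trans (norm_nonneg _) (hB _ hne.choose_spec)
  -- approximate fixed point sequence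
  have hseq : ∀ n : ℕ, ∃ x ∈ C, ‖x - T x‖ < 1/(n+1) :=
    fun n => aux_afp' hne hb hmT ha hcpos hsum hT (1/(n+1)) (by positivity)
  choose x hxC hxd using hseq
  set dd : ℕ → ℝ := fun n => ‖x n - T (x n)‖ with hdd
  have hd0 : Tendsto dd atTop (𝓝 0) := by
    apply squeeze_zero (fun n => norm_nonneg _) (fun n => (hxd n).le)
    exact_mod_cast tendsto_one_div_add_atTop_nhds_zero_nat (𝕜 := ℝ)
  -- ultrafilter
  set 𝒰 : Ultrafilter ℕ := Ultrafilter.of atTop with h𝒰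
  have hle : (𝒰 : Filter ℕ) ≤ atTop := Ultrafilter.of_le _
  have hd0' : Tendsto dd 𝒰 (𝓝 0) := hd0.mono_left hle
  -- the weak limit functional
  have hFex : ∀ w : H, ∃ L, Tendsto (fun n => ⟪x n, w⟫) 𝒰 (𝓝 L) := by
    intro w
    apply aux_lim 𝒰 _ (R := B * ‖w‖)
    intro n
    exact le_trans (abs_real_inner_le_norm _ _)
      (mul_le_mul_of_nonneg_right (hB _ (hxC n)) (norm_nonneg _))
  choose F hF using hFex
  have hFbound : ∀ w, ‖F w‖ ≤ B * ‖w‖ := by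
    intro w
    rw [Real.norm_eq_abs, abs_le]
    constructor
    · apply ge_of_tendsto (hF w)
      filter_upwards with n
      have := abs_real_inner_le_norm (x n) w
      have h2 := mul_le_mul_of_nonneg_right (hB _ (hxC n)) (norm_nonneg w)
      rw [abs_le] at this
      linarith [this.1]
    · apply le_of_tendsto (hF w)
      filter_upwards with n
      have := abs_real_inner_le_norm (x n) w
      have h2 := mul_le_mul_of_nonneg_right (hB _ (hxC n)) (norm_nonneg w)
      rw [abs_le] at this
      linarith [this.2]
  have hFadd : ∀ w₁ w₂, F (w₁ + w₂) = F w₁ + F w₂ := by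
    intro w₁ w₂
    have h1 : Tendsto (fun n => ⟪x n, w₁ + w₂⟫) 𝒰 (𝓝 (F w₁ + F w₂)) := by
      simp only [inner_add_right]
      exact (hF w₁).add (hF w₂)
    exact tendsto_nhds_unique (hF _) h1
  have hFsmul : ∀ (t : ℝ) (w : H), F (t • w) = t * F w := by
    intro t w
    have h1 : Tendsto (fun n => ⟪x n, t • w⟫) 𝒰 (𝓝 (t * F w)) := by
      simp only [inner_smul_right]
      exact (hF w).const_mul t
    exact tendsto_nhds_unique (hF _) h1
  set Flin : H →ₗ[ℝ] ℝ :=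
    { toFun := F, map_add' := hFadd, map_smul' := hFsmul } with hFlin
  set Fcont : H →L[ℝ] ℝ := Flin.mkContinuous B (fun w => hFbound w) with hFcont
  set s : H := (InnerProductSpace.toDual ℝ H).symm Fcont with hs
  have hsF : ∀ w, ⟪s, w⟫ = F w := fun w => InnerProductSpace.toDual_symm_apply
  -- the limit of ‖x n‖ ^ 2
  obtain ⟨q, hq⟩ := aux_lim 𝒰 (fun n => ‖x n‖^2) (R := B^2)
    (fun n => by
      rw [abs_of_nonneg (by positivity)]
      exact pow_le_pow_left₀ (norm_nonneg _) (hB _ (hxC n)) 2)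
  -- the asymptotic center
  obtain ⟨z, hzC, hz⟩ := aux_proj' hne hclosed hconv s
  refine ⟨z, hzC, ?_⟩
  have hTzC : T z ∈ C := hmT hzC
  -- key inequality
  have hkey : ∀ n, ‖T z - x n‖ ≤ ‖z - x n‖ + 3 * dd n := by
    intro n
    have h := hT z hzC (x n) (hxC n)
    have t1 : ‖T z - x n‖ ≤ ‖T z - T (x n)‖ + ‖T (x n) - x n‖ := by
      simpa [dist_eq_norm] using dist_triangle (T z) (T (x n)) (x n)
    have t2 : ‖T (x n) - z‖ ≤ ‖T (x n) - x n‖ + ‖x n - z‖ := by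
      simpa [dist_eq_norm] using dist_triangle (T (x n)) (x n) z
    have e1 : ‖T (x n) - x n‖ = dd n := norm_sub_rev _ _
    have e2 : ‖x n - z‖ = ‖z - x n‖ := norm_sub_rev _ _
    have hdn : 0 ≤ dd n := norm_nonneg _
    nlinarith [norm_nonneg (T z - x n), norm_nonneg (z - x n), norm_nonneg (T z - T (x n))]
  -- limits of squared norms
  have hlimz : Tendsto (fun n => ‖z - x n‖^2) 𝒰 (𝓝 (‖z‖^2 - 2 * F z + q)) := by
    have hrw : ∀ n, ‖z - x n‖^2 = ‖z‖^2 - 2 * ⟪x n, z⟫ + ‖x n‖^2 := by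
      intro n
      rw [norm_sub_sq_real, real_inner_comm]
    simp only [hrw]
    exact (tendsto_const_nhds.sub ((hF z).const_mul 2)).add hq
  have hlimTz : Tendsto (fun n => ‖T z - x n‖^2) 𝒰 (𝓝 (‖T z‖^2 - 2 * F (T z) + q)) := by
    have hrw : ∀ n, ‖T z - x n‖^2 = ‖T z‖^2 - 2 * ⟪x n, T z⟫ + ‖x n‖^2 := by
      intro n
      rw [norm_sub_sq_real, real_inner_comm]
    simp only [hrw]
    exact (tendsto_const_nhds.sub ((hF (T z)).const_mul 2)).add hq
  have hlimrhs : Tendsto (fun n => ‖z - x n‖^2 + (6 * dd n * (B + ‖z‖) + 9 * dd n^2)) 𝒰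
      (𝓝 (‖z‖^2 - 2 * F z + q)) := by
    have h0 : Tendsto (fun n => 6 * dd n * (B + ‖z‖) + 9 * dd n^2) 𝒰 (𝓝 0) := by
      have h1 : Tendsto (fun n => 6 * dd n * (B + ‖z‖)) 𝒰 (𝓝 (6 * 0 * (B + ‖z‖))) :=
        (hd0'.const_mul 6).mul_const _
      have h2 : Tendsto (fun n => 9 * dd n^2) 𝒰 (𝓝 (9 * 0^2)) := by
        exact ((hd0'.pow 2).const_mul 9)
      simpa using h1.add h2
    simpa using hlimz.add h0
  -- pass inequality to the limit
  have hle2 : ‖T z‖^2 - 2 * F (T z) + q ≤ ‖z‖^2 - 2 * F z + q := by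
    apply le_of_tendsto_of_tendsto' hlimTz hlimrhs
    intro n
    have h := hkey n
    have h1 : ‖z - x n‖ ≤ B + ‖z‖ := by
      have := norm_sub_le z (x n)
      have := hB _ (hxC n)
      linarith [norm_sub_le z (x n), hB _ (hxC n)]
    have hdn : 0 ≤ dd n := norm_nonneg _
    nlinarith [norm_nonneg (T z - x n), norm_nonneg (z - x n)]
  -- projection inequality
  have hproj : ⟪s - z, T z - z⟫ ≤ 0 := hz (T z) hTzC
  have hFz : F z = ⟪s, z⟫ := (hsF z).symm
  have hFTz : F (T z) = ⟪s, T z⟫ := (hsF (T z)).symm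
  -- conclude T z = z
  have hsq : ‖T z - z‖^2 ≤ 0 := by
    have e1 : ‖T z - z‖^2 = ⟪T z, T z⟫ - 2*⟪z, T z⟫ + ⟪z, z⟫ := by
      rw [← real_inner_self_eq_norm_sq]
      simp only [inner_sub_left, inner_sub_right]
      rw [real_inner_comm (T z) z]
      ring
    have e2 : ‖T z‖^2 = ⟪T z, T z⟫ := (real_inner_self_eq_norm_sq _).symm
    have e3 : ‖z‖^2 = ⟪z, z⟫ := (real_inner_self_eq_norm_sq _).symm
    have e4 : ⟪s - z, T z - z⟫ = ⟪s, T z⟫ - ⟪s, z⟫ - ⟪z, T z⟫ + ⟪z, z⟫ := by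
      simp only [inner_sub_left, inner_sub_right]
      ring
    rw [e1]
    rw [e2, e3, hFz, hFTz] at hle2
    rw [e4] at hproj
    linarith
  have : ‖T z - z‖ = 0 := by
    have h0 := sq_nonneg ‖T z - z‖
    have : ‖T z - z‖^2 = 0 := le_antisymm hsq (by positivity)
    exact pow_eq_zero_iff (by norm_num) |>.mp this
  rw [norm_eq_zero, sub_eq_zero] at this
  exact this

end

/-- In a real Hilbert space, a nonempty closed convex set `C` has the
fixed point property for (c)-mappings iff `C` is bounded. -/
theorem c_mapping_fpp_iff_bounded
    {H : Type*} [NormedAddCommGroup H] [InnerProductSpace ℝ H] [CompleteSpace H]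
    (C : Set H) (hne : C.Nonempty) (hclosed : IsClosed C) (hconv : Convex ℝ C) :
    (∀ T : H → H, Set.MapsTo T C C → IsCMapping T C → ∃ x ∈ C, T x = x) ↔
      Bornology.IsBounded C := by
  constructor
  · intro hfpp
    exact aux_forward C hne hclosed hconv hfpp
  · intro hb T hmT hcm
    obtain ⟨a, c, haI, hcI, hcpos, hsum, hT⟩ := hcm
    exact aux_reverse hne hclosed hconv hb T hmT haI.1 hcpos hsum hT
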